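/- Let G be a connected graph and let S ⊆ G × (0,1) have a stairwell structure ⟨S₁,…,S_k⟩. Then for each x ∈ G, the number of indices i ∈ {1,…,k} such that x ∈ π(Sᵢ) has the same parity as k. In particular, if k is odd, then π(S) = G. -/

import Mathlib

open Set Topology

/-- A subset of a space is *regular* if it is closed and has finitely many connected
components, each of which is non-degenerate. -/
def IsRegularSet {G : Type*} [TopologicalSpace G] (A : Set G) : Prop :=
  IsClosed A ∧ {C : Set G | ∃ x ∈ A, C = connectedComponentIn A x}.Finite ∧
    ∀ x ∈ A, (connectedComponentIn A x).Nontrivial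

/-- A point of a graph is *ordinary* (neither a branch point nor an endpoint) if it has an
open neighborhood homeomorphic to an open interval. -/
def IsOrdinaryPoint {G : Type*} [TopologicalSpace G] (x : G) : Prop :=
  ∃ U : Set G, IsOpen U ∧ x ∈ U ∧ Nonempty (U ≃ₜ Set.Ioo (0 : ℝ) 1)

/-- A topological space is a *graph* if it is a finite union of arcs which intersect
at most in endpoints. -/
def IsGraphSpace (G : Type*) [TopologicalSpace G] : Prop :=
  ∃ (n : ℕ) (f : Fin n → unitInterval → G),
    (∀ i, Continuous (f i) ∧ Function.Injective (f i)) ∧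
    (⋃ i, Set.range (f i)) = Set.univ ∧
    ∀ i j, i ≠ j →
      Set.range (f i) ∩ Set.range (f j) ⊆ ({f i 0, f i 1} : Set G) ∩ {f j 0, f j 1}

/-- A subset of a space is a *graph* if it is a finite union of arcs which intersect
at most in endpoints. -/
def IsGraphSet {E : Type*} [TopologicalSpace E] (G : Set E) : Prop :=
  ∃ (n : ℕ) (f : Fin n → unitInterval → E),
    (∀ i, Continuous (f i) ∧ Function.Injective (f i)) ∧
    G = ⋃ i, Set.range (f i) ∧
    ∀ i j, i ≠ j →
      Set.range (f i) ∩ Set.range (f j) ⊆ ({f i 0, f i 1} : Set E) ∩ {f j 0, f j 1}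

/-- `φ` restricted to `A` is a homeomorphism onto `B`. -/
def MapsHomeoOnto {F G : Type*} [TopologicalSpace F] [TopologicalSpace G]
    (φ : F → G) (A : Set F) (B : Set G) : Prop :=
  φ '' A = B ∧ Topology.IsEmbedding (A.restrict φ)

/-- A *simple fold* on `G`, with pieces `F1, F2, F3` of `F` and projection `φ : F → G`,
satisfying properties (F1)-(F5). -/
def IsSimpleFold {F G : Type*} [TopologicalSpace F] [TopologicalSpace G]
    (φ : F → G) (F1 F2 F3 : Set F) : Prop :=
  Continuous φ ∧ F1 ∪ F2 ∪ F3 = Set.univ ∧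
  -- (F1)
  ((φ '' F1).Nonempty ∧ (φ '' F2).Nonempty ∧ (φ '' F3).Nonempty) ∧
  (IsRegularSet (φ '' F1) ∧ IsRegularSet (φ '' F2) ∧ IsRegularSet (φ '' F3)) ∧
  -- (F2)
  (φ '' F1) ∪ (φ '' F3) = Set.univ ∧ (φ '' F2) = (φ '' F1) ∩ (φ '' F3) ∧
  -- (F3)
  closure ((φ '' F1) \ (φ '' F2)) ∩ closure ((φ '' F3) \ (φ '' F2)) = ∅ ∧
  -- (F4)
  (MapsHomeoOnto φ F1 (φ '' F1) ∧ MapsHomeoOnto φ F2 (φ '' F2) ∧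
    MapsHomeoOnto φ F3 (φ '' F3)) ∧
  -- (F5)
  frontier (φ '' F1) = φ '' (F1 ∩ F2) ∧ frontier (φ '' F3) = φ '' (F2 ∩ F3) ∧
  F1 ∩ F3 = ∅

/-- `S` separates `A` from `B` within `Y`: the complement `Y \ S` is the union of two
disjoint sets, relatively open in `Y \ S`, containing `A` and `B` respectively. -/
def SeparatesWithin {E : Type*} [TopologicalSpace E] (Y S A B : Set E) : Prop :=
  ∃ U V : Set E,
    U ∪ V = Y \ S ∧ U ∩ V = ∅ ∧ A ⊆ U ∧ B ⊆ V ∧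
    (∃ U', IsOpen U' ∧ U = (Y \ S) ∩ U') ∧ (∃ V', IsOpen V' ∧ V = (Y \ S) ∩ V')

/-- `A` has *consistent complement relative to* `B`: for each component `C` of the
complement of `A`, either `∂C ⊆ B` or `∂C ∩ B = ∅`. -/
def ConsistentComplement {G : Type*} [TopologicalSpace G] (A B : Set G) : Prop :=
  ∀ x ∉ A, frontier (connectedComponentIn Aᶜ x) ⊆ B ∨
    frontier (connectedComponentIn Aᶜ x) ∩ B = ∅

/-- The *`A` side of `B`*, `σ_B(A)`: the closure of the union of all components of
`G \ B` meeting `A`. -/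
def sideOf {G : Type*} [TopologicalSpace G] (B A : Set G) : Set G :=
  closure (⋃ x ∈ {x : G | x ∉ B ∧ (connectedComponentIn Bᶜ x ∩ A).Nonempty},
    connectedComponentIn Bᶜ x)

/-- A subset of `G × [0,1]` is *straight* if it is closed, the projection is injective on
it, and its projection is regular. -/
def IsStraight {G : Type*} [TopologicalSpace G] (S : Set (G × unitInterval)) : Prop :=
  IsClosed S ∧ Set.InjOn Prod.fst S ∧ IsRegularSet (Prod.fst '' S)

/-- The *end set* of a straight set. -/
def endSet {G : Type*} [TopologicalSpace G] (S : Set (G × unitInterval)) :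
    Set (G × unitInterval) :=
  S ∩ Prod.fst ⁻¹' (frontier (Prod.fst '' S))

/-- A *stairwell structure* of height `k` for `S ⊆ G × [0,1]`, given by the pieces
`Sp 1, …, Sp k` with end set decompositions `E(Sp i) = α i ∪ β i`. -/
def IsStairwell {G : Type*} [TopologicalSpace G]
    (Sp α β : ℕ → Set (G × unitInterval)) (k : ℕ) (S : Set (G × unitInterval)) : Prop :=
  1 ≤ k ∧
  -- (S1)
  (∀ i ∈ Set.Icc 1 k, (Sp i).Nonempty ∧ IsStraight (Sp i)) ∧
  S = ⋃ i ∈ Set.Icc 1 k, Sp i ∧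
  -- (S2)
  (∀ i ∈ Set.Icc 1 k, endSet (Sp i) = α i ∪ β i ∧ α i ∩ β i = ∅ ∧
    (α i).Finite ∧ (β i).Finite) ∧
  α 1 = ∅ ∧ β k = ∅ ∧ (∀ i, 1 ≤ i → i < k → β i = α (i + 1)) ∧
  -- (S3)
  (∀ i, 1 ≤ i → i < k → ∃ V : Set G, IsOpen V ∧ Prod.fst '' β i ⊆ V ∧
    Prod.fst '' Sp i ∩ V = Prod.fst '' Sp (i + 1) ∩ V) ∧
  -- (S4)
  (∀ i ∈ Set.Icc 1 k, ConsistentComplement (Prod.fst '' Sp i) (Prod.fst '' α i) ∧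
    ConsistentComplement (Prod.fst '' Sp i) (Prod.fst '' β i)) ∧
  -- (S5)
  (∀ i ∈ Set.Icc 2 k, ∀ p ∈ α i, IsOrdinaryPoint p.1) ∧
  (∀ i j, 2 ≤ i → i < j → j ≤ k → Prod.fst '' α i ∩ Prod.fst '' α j = ∅)

/-- A *broken stairwell structure* of height `k` with a pit at level `i0`. -/
def IsBrokenStairwell {G : Type*} [TopologicalSpace G]
    (Sp α β : ℕ → Set (G × unitInterval)) (γ P1 P2 : Set (G × unitInterval))
    (k i0 : ℕ) (S : Set (G × unitInterval)) : Prop :=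
  1 ≤ k ∧ 1 ≤ i0 ∧ i0 ≤ k ∧
  -- (S1')
  (∀ i ∈ Set.Icc 1 k, (Sp i).Nonempty ∧ IsStraight (Sp i)) ∧
  P1.Nonempty ∧ IsStraight P1 ∧ P2.Nonempty ∧ IsStraight P2 ∧
  S = (⋃ i ∈ Set.Icc 1 k, Sp i) ∪ P1 ∪ P2 ∧
  -- (S2')
  (∀ i ∈ Set.Icc 1 k, i ≠ i0 → endSet (Sp i) = α i ∪ β i) ∧
  endSet (Sp i0) = α i0 ∪ β i0 ∪ γ ∧
  (∀ i ∈ Set.Icc 1 k, α i ∩ β i = ∅ ∧ (α i).Finite ∧ (β i).Finite) ∧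
  γ.Finite ∧ α i0 ∩ γ = ∅ ∧ β i0 ∩ γ = ∅ ∧
  α 1 = ∅ ∧ β k = ∅ ∧ (∀ i, 1 ≤ i → i < k → β i = α (i + 1)) ∧
  endSet P2 = endSet P1 ∪ γ ∧ endSet P1 ∩ γ = ∅ ∧
  -- (S3')
  (∀ i, 1 ≤ i → i < k → ∃ V : Set G, IsOpen V ∧ Prod.fst '' β i ⊆ V ∧
    Prod.fst '' Sp i ∩ V = Prod.fst '' Sp (i + 1) ∩ V) ∧
  (∃ V : Set G, IsOpen V ∧ Prod.fst '' endSet P1 ⊆ V ∧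
    Prod.fst '' P1 ∩ V = Prod.fst '' P2 ∩ V) ∧
  (∃ W : Set G, IsOpen W ∧ Prod.fst '' γ ⊆ W ∧
    Prod.fst '' P2 ∩ W = Prod.fst '' Sp i0 ∩ W) ∧
  -- (S4')
  (∀ i ∈ Set.Icc 1 k, ConsistentComplement (Prod.fst '' Sp i) (Prod.fst '' α i) ∧
    ConsistentComplement (Prod.fst '' Sp i) (Prod.fst '' β i)) ∧
  ConsistentComplement (Prod.fst '' Sp i0) (Prod.fst '' γ) ∧
  ConsistentComplement (Prod.fst '' P2) (Prod.fst '' endSet P1) ∧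
  ConsistentComplement (Prod.fst '' P2) (Prod.fst '' γ) ∧
  -- (S5')
  (∀ i ∈ Set.Icc 2 k, ∀ p ∈ α i, IsOrdinaryPoint p.1) ∧
  (∀ p ∈ endSet P1, IsOrdinaryPoint p.1) ∧ (∀ p ∈ γ, IsOrdinaryPoint p.1) ∧
  (∀ i j, 2 ≤ i → i < j → j ≤ k → Prod.fst '' α i ∩ Prod.fst '' α j = ∅) ∧
  (∀ i ∈ Set.Icc 2 k, Prod.fst '' α i ∩ Prod.fst '' endSet P1 = ∅ ∧
    Prod.fst '' α i ∩ Prod.fst '' γ = ∅) ∧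
  Prod.fst '' endSet P1 ∩ Prod.fst '' γ = ∅ ∧
  -- (S6')
  Prod.fst '' α i0 ∩ Prod.fst '' (P1 ∪ P2) = ∅

/-- A compactum is *hereditarily indecomposable* if every non-degenerate subcontinuum is
indecomposable, i.e. is not the union of two proper subcontinua. -/
def HereditarilyIndecomposable (X : Type*) [TopologicalSpace X] : Prop :=
  ∀ K : Set X, IsCompact K → IsConnected K → K.Nontrivial →
    ¬ ∃ A B : Set X, IsCompact A ∧ IsConnected A ∧ IsCompact B ∧ IsConnected B ∧
      A ∪ B = K ∧ A ≠ K ∧ B ≠ K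

/-- A continuum is *arc-like* if for every `ε > 0` it admits an `ε`-map onto `[0,1]`. -/
def ArcLike (X : Type*) [MetricSpace X] : Prop :=
  ∀ ε > (0 : ℝ), ∃ f : X → unitInterval, Continuous f ∧ Function.Surjective f ∧
    ∀ y, Metric.diam (f ⁻¹' {y}) < ε

/-- A continuum has *span zero* if every subcontinuum `Z ⊆ X × X` with
`π₁(Z) ⊆ π₂(Z)` meets the diagonal. -/
def SpanZero (X : Type*) [TopologicalSpace X] : Prop :=
  ∀ Z : Set (X × X), IsCompact Z → IsConnected Z →
    Prod.fst '' Z ⊆ Prod.snd '' Z → ∃ x, (x, x) ∈ Z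


section AuxiliaryLemmas

theorem unitInterval_locallyConnected' : LocallyConnectedSpace unitInterval := by
  rw [locallyConnectedSpace_iff_connected_subsets]
  intro t U hU
  rw [Metric.mem_nhds_iff] at hU
  obtain ⟨ε, hε, hball⟩ := hU
  refine ⟨Subtype.val ⁻¹' Set.Icc ((t:ℝ) - ε/2) ((t:ℝ) + ε/2), ?_, ?_, ?_⟩
  · refine Filter.mem_of_superset (IsOpen.mem_nhds
      (isOpen_Ioo.preimage continuous_subtype_val) ?_)
      (Set.preimage_mono Set.Ioo_subset_Icc_self)
    constructor <;> simp <;> linarith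
  · rw [← Topology.IsInducing.isPreconnected_image Topology.IsInducing.subtypeVal]
    rw [Subtype.image_preimage_coe]
    have : unitInterval ∩ Set.Icc ((t:ℝ) - ε/2) ((t:ℝ) + ε/2)
        = Set.Icc (max 0 ((t:ℝ) - ε/2)) (min 1 ((t:ℝ) + ε/2)) := by
      exact Set.Icc_inter_Icc
    rw [this]
    exact isPreconnected_Icc
  · intro z hz
    apply hball
    simp only [Metric.mem_ball]
    rw [Subtype.dist_eq, Real.dist_eq]
    simp only [Set.mem_preimage, Set.mem_Icc] at hz
    rw [abs_sub_lt_iff]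
    constructor <;> linarith

theorem IsGraphSpace.locallyConnectedSpace {G : Type*} [TopologicalSpace G] [CompactSpace G]
    [T2Space G] (hG : IsGraphSpace G) : LocallyConnectedSpace G := by
  obtain ⟨n, f, hf, hcover, -⟩ := hG
  rw [locallyConnectedSpace_iff_connected_subsets]
  intro x U hU
  have key : ∀ i : Fin n, ∃ R K : Set G, IsClosed R ∧ x ∉ R ∧ IsPreconnected K ∧ x ∈ K ∧
      K ⊆ U ∧ Set.range (f i) ⊆ R ∪ K := by
    intro i
    by_cases hx : x ∈ Set.range (f i)
    · obtain ⟨t, ht⟩ := hx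
      have hcont := (hf i).1
      have hinj := (hf i).2
      have hUt : f i ⁻¹' U ∈ nhds t := hcont.continuousAt.preimage_mem_nhds (ht ▸ hU)
      obtain ⟨s, hs, hscl, hsub⟩ := exists_mem_nhds_isClosed_subset hUt
      obtain ⟨V, hV, hVpre, hVsub⟩ :=
        locallyConnectedSpace_iff_connected_subsets.mp unitInterval_locallyConnected' t
          (interior s) (IsOpen.mem_nhds isOpen_interior (mem_interior_iff_mem_nhds.mpr hs))
      refine ⟨f i '' (interior V)ᶜ, f i '' closure V, ?_, ?_, ?_, ?_, ?_, ?_⟩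
      · exact (((isOpen_interior (s := V)).isClosed_compl.isCompact).image hcont).isClosed
      · rintro ⟨u, hu, hux⟩
        have : u = t := hinj (hux.trans ht.symm)
        subst this
        exact hu (mem_interior_iff_mem_nhds.mpr hV)
      · exact (hVpre.closure).image _ hcont.continuousOn
      · exact ⟨t, subset_closure (mem_of_mem_nhds hV), ht⟩
      · rintro _ ⟨u, hu, rfl⟩
        exact hsub (hscl.closure_subset_iff.mpr (hVsub.trans interior_subset)
          (closure_mono (le_refl V) hu))
      · rintro _ ⟨u, rfl⟩
        by_cases hu : u ∈ interior V
        · exact Or.inr ⟨u, subset_closure (interior_subset hu), rfl⟩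
        · exact Or.inl ⟨u, hu, rfl⟩
    · exact ⟨Set.range (f i), {x}, (isCompact_range (hf i).1).isClosed, hx,
        isPreconnected_singleton, rfl, by simpa using mem_of_mem_nhds hU,
        fun y hy => Or.inl hy⟩
  choose R K hRcl hxR hKpre hxK hKU hcov using key
  refine ⟨⋃ i, K i, ?_, ?_, Set.iUnion_subset hKU⟩
  · have hBad : IsClosed (⋃ i, R i) := isClosed_iUnion_of_finite hRcl
    refine Filter.mem_of_superset (IsOpen.mem_nhds hBad.isOpen_compl ?_) ?_
    · simpa using hxR
    · intro y hy
      have : y ∈ ⋃ i, Set.range (f i) := hcover ▸ Set.mem_univ y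
      obtain ⟨i, hi⟩ := Set.mem_iUnion.mp this
      rcases hcov i hi with h | h
      · exact absurd (Set.mem_iUnion.mpr ⟨i, h⟩) hy
      · exact Set.mem_iUnion.mpr ⟨i, h⟩
  · have := isPreconnected_sUnion x (Set.range K) (by rintro _ ⟨i, rfl⟩; exact hxK i)
      (by rintro _ ⟨i, rfl⟩; exact hKpre i)
    rwa [Set.sUnion_range] at this

theorem mem_ccIn_of_mem_closure {X : Type*} [TopologicalSpace X] {F : Set X} {y z : X}
    (hy : y ∈ F) (hz : z ∈ closure (connectedComponentIn F y)) (hzF : z ∈ F) :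
    z ∈ connectedComponentIn F y := by
  have hpre : IsPreconnected (connectedComponentIn F y ∪ {z}) := by
    refine IsPreconnected.subset_closure isPreconnected_connectedComponentIn
      Set.subset_union_left ?_
    exact Set.union_subset subset_closure (by simpa using hz)
  have := hpre.subset_connectedComponentIn (Or.inl (mem_connectedComponentIn hy))
    (Set.union_subset (connectedComponentIn_subset F y) (by simpa using hzF))
  exact this (Or.inr rfl)

theorem frontier_ccIn_subset {X : Type*} [TopologicalSpace X] [LocallyConnectedSpace X]
    {T : Set X} (hT : IsClosed T) {y : X} (hy : y ∉ T) :
    frontier (connectedComponentIn Tᶜ y) ⊆ frontier T := by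
  set D := connectedComponentIn Tᶜ y with hD
  have hDo : IsOpen D := hT.isOpen_compl.connectedComponentIn
  intro z hz
  rw [hDo.frontier_eq] at hz
  obtain ⟨hz1, hz2⟩ := hz
  have hzT : z ∈ T := by
    by_contra hzT
    exact hz2 (mem_ccIn_of_mem_closure hy hz1 hzT)
  refine ⟨subset_closure hzT, fun hzint => ?_⟩
  obtain ⟨w, hw⟩ := mem_closure_iff.mp hz1 (interior T) isOpen_interior hzint
  exact (connectedComponentIn_subset Tᶜ y hw.2) (interior_subset hw.1)

theorem frontier_ccIn_nonempty {X : Type*} [TopologicalSpace X] [LocallyConnectedSpace X]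
    [ConnectedSpace X] {T : Set X} (hTne : T.Nonempty) {y : X} (hy : y ∉ T) :
    (frontier (connectedComponentIn Tᶜ y)).Nonempty := by
  rw [Set.nonempty_iff_ne_empty]
  intro hfr
  have hclopen : IsClopen (connectedComponentIn Tᶜ y) := isClopen_iff_frontier_eq_empty.mpr hfr
  have := hclopen.eq_univ ⟨y, mem_connectedComponentIn hy⟩
  obtain ⟨t, ht⟩ := hTne
  have : t ∈ connectedComponentIn Tᶜ y := this ▸ Set.mem_univ t
  exact connectedComponentIn_subset _ _ this ht

theorem cluster_right {O : Set ℝ} (hO : IsOpen O) {t δ : ℝ} (hδ : 0 < δ) (hto : t ∉ O)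
    (htc : t ∈ closure (O ∩ Set.Ioi t))
    (hfin : ((closure O \ O) ∩ Set.Ioo (t - δ) (t + δ)).Finite) :
    ∃ o ∈ O, t ∈ closure (connectedComponentIn O o) := by
  by_contra hcon
  push_neg at hcon
  set S := (closure O \ O) ∩ Set.Ioo t (t + δ) with hSdef
  have hSfin : S.Finite := hfin.subset (by
    rintro z ⟨h1, h2, h3⟩
    exact ⟨h1, ⟨by linarith, h3⟩⟩)
  have step : ∀ o, o ∈ O → t < o → o < t + δ → ∃ c ∈ S, c ≤ o := by
    intro o hoO hto' hoδ
    set E := connectedComponentIn O o with hEdef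
    have hEpre : IsPreconnected E := isPreconnected_connectedComponentIn
    have hEopen : IsOpen E := hO.connectedComponentIn
    have hoE : o ∈ E := mem_connectedComponentIn hoO
    have hEsub : E ⊆ O := connectedComponentIn_subset O o
    have hEIoi : E ⊆ Set.Ioi t := by
      intro z hz
      by_contra hzle
      simp only [Set.mem_Ioi, not_lt] at hzle
      have : t ∈ E := (hEpre.ordConnected).out hz hoE ⟨hzle, le_of_lt hto'⟩
      exact hto (hEsub this)
    have hEne : E.Nonempty := ⟨o, hoE⟩
    have hbdd : BddBelow E := ⟨t, fun z hz => le_of_lt (hEIoi hz)⟩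
    set c := sInf E with hcdef
    have hcle : c ≤ o := csInf_le hbdd hoE
    have hct : t ≤ c := le_csInf hEne fun z hz => le_of_lt (hEIoi hz)
    have hccl : c ∈ closure E := (isGLB_csInf hEne hbdd).mem_closure hEne
    have hcO : c ∉ O := by
      intro hcO
      have hcE : c ∈ E := mem_ccIn_of_mem_closure hoO hccl hcO
      obtain ⟨ε, hε, hball⟩ := Metric.isOpen_iff.mp hEopen c hcE
      have hmem : c - ε / 2 ∈ E := hball (by
        simp only [Metric.mem_ball, Real.dist_eq]
        rw [abs_sub_lt_iff]; constructor <;> linarith)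
      linarith [csInf_le hbdd hmem]
    have hcne : c ≠ t := fun h => hcon o hoO (h ▸ hccl)
    exact ⟨c, ⟨⟨closure_mono hEsub hccl, hcO⟩,
      ⟨lt_of_le_of_ne hct (Ne.symm hcne), lt_of_le_of_lt hcle hoδ⟩⟩, hcle⟩
  have getpt : ∀ ε : ℝ, 0 < ε → ∃ o ∈ O, t < o ∧ o < t + ε := by
    intro ε hε
    obtain ⟨o, hob, hoO, hoI⟩ := mem_closure_iff.mp htc (Metric.ball t ε)
      Metric.isOpen_ball (Metric.mem_ball_self hε)
    rw [Metric.mem_ball, Real.dist_eq, abs_sub_lt_iff] at hob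
    exact ⟨o, hoO, hoI, by linarith [hob.1]⟩
  by_cases hSne : S.Nonempty
  · have hSbdd : BddBelow S := hSfin.bddBelow
    set m := sInf S with hm
    have hmS : m ∈ S := hSne.csInf_mem hSfin
    have htm : t < m := hmS.2.1
    obtain ⟨o, hoO, ho1, ho2⟩ := getpt (min δ (m - t)) (lt_min hδ (by linarith))
    obtain ⟨c, hcS, hcle⟩ := step o hoO ho1
      (lt_of_lt_of_le ho2 (add_le_add_right (min_le_left _ _) t))
    have h1 : m ≤ c := csInf_le hSbdd hcS
    have h2 : o < t + (m - t) := lt_of_lt_of_le ho2 (add_le_add_right (min_le_right _ _) t)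
    linarith
  · obtain ⟨o, hoO, ho1, ho2⟩ := getpt δ hδ
    obtain ⟨c, hcS, -⟩ := step o hoO ho1 ho2
    exact hSne ⟨c, hcS⟩

theorem cluster {O : Set ℝ} (hO : IsOpen O) {t δ : ℝ} (hδ : 0 < δ) (hto : t ∉ O)
    (htc : t ∈ closure O)
    (hfin : ((closure O \ O) ∩ Set.Ioo (t - δ) (t + δ)).Finite) :
    ∃ o ∈ O, t ∈ closure (connectedComponentIn O o) := by
  have hsplit : O = (O ∩ Set.Ioi t) ∪ (O ∩ Set.Iio t) := by
    ext z
    constructor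
    · intro hz
      rcases lt_trichotomy t z with h | h | h
      · exact Or.inl ⟨hz, h⟩
      · exact absurd (h ▸ hz) hto
      · exact Or.inr ⟨hz, h⟩
    · rintro (⟨h, -⟩ | ⟨h, -⟩) <;> exact h
  rw [hsplit, closure_union] at htc
  rcases htc with h | h
  · exact cluster_right hO hδ hto h hfin
  · set φ : ℝ ≃ₜ ℝ := Homeomorph.neg ℝ with hφ
    have hφdef : ∀ z : ℝ, φ z = -z := fun z => rfl
    set O' := φ '' O with hO'
    have hO'open : IsOpen O' := φ.isOpenMap O hO
    have hto' : -t ∉ O' := by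
      rintro ⟨z, hz, hzz⟩
      rw [hφdef] at hzz
      have : z = t := by linarith [neg_inj.mp hzz]
      exact hto (this ▸ hz)
    have himg : φ '' (O ∩ Set.Iio t) = O' ∩ Set.Ioi (-t) := by
      rw [Set.image_inter φ.injective]
      congr 1
      ext z
      simp only [Set.mem_image, Set.mem_Iio, Set.mem_Ioi]
      constructor
      · rintro ⟨w, hw, rfl⟩; rw [hφdef]; linarith
      · intro hz; exact ⟨-z, by rw [hφdef] at *; constructor <;> [linarith; simp]⟩
    have htc' : -t ∈ closure (O' ∩ Set.Ioi (-t)) := by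
      rw [← himg, ← φ.image_closure]
      exact ⟨t, h, rfl⟩
    have hfin' : ((closure O' \ O') ∩ Set.Ioo (-t - δ) (-t + δ)).Finite := by
      have h1 : closure O' \ O' = φ '' (closure O \ O) := by
        rw [← φ.image_closure, Set.image_diff φ.injective]
      have h2 : (closure O' \ O') ∩ Set.Ioo (-t - δ) (-t + δ)
          ⊆ φ '' ((closure O \ O) ∩ Set.Ioo (t - δ) (t + δ)) := by
        rw [h1, Set.image_inter φ.injective]
        intro z hz
        refine ⟨hz.1, ?_⟩
        obtain ⟨hz1, hz2⟩ := hz.2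
        exact ⟨-z, ⟨by linarith, by linarith⟩, by rw [hφdef]; ring⟩
      exact (hfin.image φ).subset h2
    obtain ⟨o', ho', hclo⟩ := cluster_right hO'open hδ hto' htc' hfin'
    obtain ⟨o, hoO, rfl⟩ := ho'
    refine ⟨o, hoO, ?_⟩
    have hcc : connectedComponentIn O' (φ o) = φ '' connectedComponentIn O o :=
      (φ.image_connectedComponentIn hoO).symm
    rw [hcc, ← φ.image_closure] at hclo
    obtain ⟨w, hw, hww⟩ := hclo
    have : w = t := by
      rw [hφdef] at hww; linarith [neg_inj.mp hww]
    exact this ▸ hw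

theorem ordinary_cluster {G : Type*} [TopologicalSpace G] {p : G} (hp : IsOrdinaryPoint p)
    {C : Set G} (hCo : IsOpen C) (hpc : p ∈ closure C) (hpn : p ∉ C)
    (hfin : (closure C \ C).Finite) {N : Set G} (hN : N ∈ nhds p) :
    ∃ E : Set G, E.Nonempty ∧ IsPreconnected E ∧ E ⊆ C ∩ N ∧ p ∈ closure E := by
  classical
  obtain ⟨U, hUo, hpU, ⟨e₀⟩⟩ := hp
  set e : ↥U → ℝ := Subtype.val ∘ e₀ with hedef
  have he : Topology.IsEmbedding e := Topology.IsEmbedding.subtypeVal.comp e₀.isEmbedding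
  have hrange : Set.range e = Set.Ioo (0:ℝ) 1 := by
    rw [hedef, Set.range_comp, Set.range_eq_univ.mpr e₀.surjective, Set.image_univ,
      Subtype.range_coe]
  have heo : Topology.IsOpenEmbedding e := ⟨he, hrange ▸ isOpen_Ioo⟩
  set u₀ : ↥U := ⟨p, hpU⟩ with hu₀def
  set t := e u₀ with htdef
  set NU : Set ↥U := Subtype.val ⁻¹' (interior N) with hNUdef
  have hNUo : IsOpen NU := isOpen_interior.preimage continuous_subtype_val
  have hu₀NU : u₀ ∈ NU := mem_interior_iff_mem_nhds.mpr hN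
  have himgNU : IsOpen (e '' NU) := heo.isOpenMap _ hNUo
  obtain ⟨ε, hε, hball⟩ := Metric.isOpen_iff.mp (himgNU.inter isOpen_Ioo) t
    ⟨⟨u₀, hu₀NU, rfl⟩, hrange ▸ Set.mem_range_self u₀⟩
  set δ := ε / 2 with hδdef
  have hδ : 0 < δ := by positivity
  set J := Set.Ioo (t - δ) (t + δ) with hJdef
  have hJball : J ⊆ Metric.ball t ε := by
    intro z hz
    rw [Metric.mem_ball, Real.dist_eq, abs_sub_lt_iff]
    obtain ⟨h1, h2⟩ := hz
    constructor <;> [linarith; linarith]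
  have hJIoo : J ⊆ Set.Ioo (0:ℝ) 1 := fun z hz => (hball (hJball hz)).2
  set M := Subtype.val '' (e ⁻¹' J) with hMdef
  have hMo : IsOpen M := hUo.isOpenMap_subtype_val _ (isOpen_Ioo.preimage he.continuous)
  have htJ : t ∈ J := ⟨by linarith, by linarith⟩
  have hpM : p ∈ M := ⟨u₀, htJ, rfl⟩
  have hmemM : ∀ u : ↥U, (u : G) ∈ M ↔ e u ∈ J := by
    intro u
    constructor
    · rintro ⟨u', hu', h⟩
      have : u' = u := Subtype.ext h
      exact this ▸ hu'
    · intro h; exact ⟨u, h, rfl⟩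
  have hMU : M ⊆ U := by rintro _ ⟨u, -, rfl⟩; exact u.2
  have hMN : M ⊆ N := by
    rintro _ ⟨u, hu, rfl⟩
    have h1 : e u ∈ e '' NU := (hball (hJball hu)).1
    obtain ⟨u', hu', he'⟩ := h1
    have : u' = u := he.injective he'
    exact interior_subset (this ▸ hu')
  set A₀ : Set ↥U := Subtype.val ⁻¹' (C ∩ M) with hA₀def
  set O := e '' A₀ with hOdef
  have hOo : IsOpen O := heo.isOpenMap _ ((hCo.inter hMo).preimage continuous_subtype_val)
  have himgA₀ : Subtype.val '' A₀ = C ∩ M := by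
    rw [hA₀def, Subtype.image_preimage_coe]
    exact Set.inter_eq_self_of_subset_right (fun z hz => hMU hz.2)
  have hpCM : p ∈ closure (C ∩ M) := by
    have h := hMo.inter_closure (t := C) ⟨hpM, hpc⟩
    rwa [Set.inter_comm] at h
  have hu₀cl : u₀ ∈ closure A₀ := by
    rw [closure_subtype, himgA₀]; exact hpCM
  have htO : t ∈ closure O := by
    rw [he.closure_eq_preimage_closure_image A₀] at hu₀cl
    exact hu₀cl
  have htnO : t ∉ O := by
    rintro ⟨u, hu, h⟩
    have : u = u₀ := he.injective h
    exact hpn ((this ▸ hu).1)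
  set ψ : ℝ → G := fun z => if h : z ∈ Set.Ioo (0:ℝ) 1 then ((e₀.symm ⟨z, h⟩ : ↥U) : G) else p
    with hψdef
  have hψe : ∀ u : ↥U, ψ (e u) = (u : G) := by
    intro u
    have hm : e u ∈ Set.Ioo (0:ℝ) 1 := hrange ▸ Set.mem_range_self u
    rw [hψdef]
    simp only [hm, dif_pos]
    have : (⟨e u, hm⟩ : Set.Ioo (0:ℝ) 1) = e₀ u := Subtype.ext rfl
    rw [this, Homeomorph.symm_apply_apply]
  have hOfin : ((closure O \ O) ∩ J).Finite := by
    have hsub : ψ '' ((closure O \ O) ∩ J) ⊆ closure C \ C := by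
      rintro _ ⟨z, ⟨⟨hz1, hz2⟩, hzJ⟩, rfl⟩
      have hzI : z ∈ Set.Ioo (0:ℝ) 1 := hJIoo hzJ
      set u : ↥U := e₀.symm ⟨z, hzI⟩ with hudef
      have heu : e u = z := by rw [hedef]; simp [hudef]
      have hψz : ψ z = (u : G) := by rw [← heu, hψe]
      rw [hψz]
      have hucl : u ∈ closure A₀ := by
        rw [he.closure_eq_preimage_closure_image A₀]
        show e u ∈ closure O
        rw [heu]; exact hz1
      have hvcl : (u : G) ∈ closure (C ∩ M) := by
        rw [closure_subtype, himgA₀] at hucl; exact hucl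
      refine ⟨closure_mono Set.inter_subset_left hvcl, ?_⟩
      intro huC
      have huM : (u : G) ∈ M := (hmemM u).mpr (heu ▸ hzJ)
      have : u ∈ A₀ := ⟨huC, huM⟩
      exact hz2 (heu ▸ ⟨u, this, rfl⟩)
    have hinj : Set.InjOn ψ ((closure O \ O) ∩ J) := by
      rintro z₁ ⟨-, hz₁⟩ z₂ ⟨-, hz₂⟩ hψ
      have h₁ : z₁ ∈ Set.Ioo (0:ℝ) 1 := hJIoo hz₁
      have h₂ : z₂ ∈ Set.Ioo (0:ℝ) 1 := hJIoo hz₂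
      rw [hψdef] at hψ
      simp only [h₁, h₂, dif_pos] at hψ
      have h3 : e₀.symm ⟨z₁, h₁⟩ = e₀.symm ⟨z₂, h₂⟩ := Subtype.ext hψ
      exact congrArg Subtype.val (e₀.symm.injective h3)
    exact Set.Finite.of_finite_image (hfin.subset hsub) hinj
  obtain ⟨o, hoO, hocl⟩ := cluster hOo hδ htnO htO hOfin
  set E₀ := connectedComponentIn O o with hE₀def
  have hE₀O : E₀ ⊆ O := connectedComponentIn_subset O o
  have hOr : O ⊆ Set.range e := by rintro _ ⟨u, -, rfl⟩; exact ⟨u, rfl⟩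
  have hE₀r : E₀ ⊆ Set.range e := hE₀O.trans hOr
  set A := e ⁻¹' E₀ with hAdef
  have heA : e '' A = E₀ := Set.image_preimage_eq_of_subset hE₀r
  have hApre : IsPreconnected A := by
    rw [← he.toIsInducing.isPreconnected_image, heA]
    exact isPreconnected_connectedComponentIn
  set E := Subtype.val '' A with hEdef
  have hEpre : IsPreconnected E := hApre.image _ continuous_subtype_val.continuousOn
  have hECM : E ⊆ C ∩ M := by
    rintro _ ⟨u, hu, rfl⟩
    have h1 : e u ∈ O := hE₀O hu
    obtain ⟨u', hu', h⟩ := h1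
    have : u' = u := he.injective h
    exact this ▸ hu'
  have hEne : E.Nonempty := by
    have h1 : o ∈ E₀ := mem_connectedComponentIn hoO
    obtain ⟨u, hu⟩ := hE₀r h1
    exact ⟨(u : G), u, show e u ∈ E₀ from hu ▸ h1, rfl⟩
  have hpE : p ∈ closure E := by
    have h1 : u₀ ∈ closure A := by
      rw [he.closure_eq_preimage_closure_image A, heA]
      exact hocl
    exact image_closure_subset_closure_image continuous_subtype_val ⟨u₀, h1, rfl⟩
  exact ⟨E, hEne, hEpre, hECM.trans (Set.inter_subset_inter_right C hMN), hpE⟩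

theorem swap_lemma {G : Type*} [TopologicalSpace G] [ConnectedSpace G] [LocallyConnectedSpace G]
    {T T' P V : Set G}
    (hT : IsClosed T) (hT' : IsClosed T') (hTne : T.Nonempty)
    (hPfin : P.Finite) (hPT : P ⊆ T) (hPT' : P ⊆ T')
    (hPord : ∀ p ∈ P, IsOrdinaryPoint p)
    (hVo : IsOpen V) (hPV : P ⊆ V) (hTV : T ∩ V = T' ∩ V)
    (hccP : ∀ y ∉ T', frontier (connectedComponentIn T'ᶜ y) ∩ P ≠ ∅ →
      frontier (connectedComponentIn T'ᶜ y) ⊆ P)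
    {x : G} (hx : x ∉ T)
    (hCP : frontier (connectedComponentIn Tᶜ x) ⊆ P) :
    x ∉ T' ∧ connectedComponentIn T'ᶜ x = connectedComponentIn Tᶜ x := by
  set C := connectedComponentIn Tᶜ x with hCdef
  have hCo : IsOpen C := hT.isOpen_compl.connectedComponentIn
  have hxC : x ∈ C := mem_connectedComponentIn hx
  have hCTc : C ⊆ Tᶜ := connectedComponentIn_subset _ _
  have hfrC : frontier C = closure C \ C := hCo.frontier_eq
  have hfne : (frontier C).Nonempty := frontier_ccIn_nonempty hTne hx
  obtain ⟨p, hpfr⟩ := hfne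
  have hpP : p ∈ P := hCP hpfr
  have hpcl : p ∈ closure C := (hfrC ▸ hpfr).1
  have hpnC : p ∉ C := (hfrC ▸ hpfr).2
  have hCfin : (closure C \ C).Finite := hPfin.subset (hfrC ▸ hCP)
  obtain ⟨E, hEne, hEpre, hEsub, hpE⟩ := ordinary_cluster (hPord p hpP) hCo hpcl hpnC hCfin
    (hVo.mem_nhds (hPV hpP))
  have hET' : E ⊆ T'ᶜ := by
    intro z hz
    intro hzT'
    have hzV : z ∈ V := (hEsub hz).2
    have hzT : z ∈ T := by
      have : z ∈ T' ∩ V := ⟨hzT', hzV⟩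
      rw [← hTV] at this
      exact this.1
    exact (hCTc (hEsub hz).1) hzT
  obtain ⟨y, hy⟩ := hEne
  have hyT' : y ∉ T' := hET' hy
  set D := connectedComponentIn T'ᶜ y with hDdef
  have hDo : IsOpen D := hT'.isOpen_compl.connectedComponentIn
  have hDT'c : D ⊆ T'ᶜ := connectedComponentIn_subset _ _
  have hED : E ⊆ D := hEpre.subset_connectedComponentIn hy hET'
  have hpDcl : p ∈ closure D := closure_mono hED hpE
  have hpT' : p ∈ T' := hPT' hpP
  have hpnD : p ∉ D := fun h => (hDT'c h) hpT'
  have hfrD : frontier D = closure D \ D := hDo.frontier_eq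
  have hpfrD : p ∈ frontier D := hfrD ▸ ⟨hpDcl, hpnD⟩
  have hDP : frontier D ⊆ P := hccP y hyT'
    (Set.nonempty_iff_ne_empty.mp ⟨p, hpfrD, hpP⟩)
  have hDC : D ⊆ C := by
    have hsub : D ⊆ C ∪ (closure C)ᶜ := by
      intro z hz
      by_cases hzcl : z ∈ closure C
      · left
        by_contra hzC
        have hfr : z ∈ frontier C := hfrC ▸ ⟨hzcl, hzC⟩
        exact (hDT'c hz) (hPT' (hCP hfr))
      · right; exact hzcl
    have hdisj : Disjoint C (closure C)ᶜ :=
      Set.disjoint_compl_right_iff_subset.mpr subset_closure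
    exact isPreconnected_connectedComponentIn.subset_left_of_subset_union hCo
      isClosed_closure.isOpen_compl hdisj hsub ⟨y, hED hy, hEsub hy |>.1⟩
  have hCD : C ⊆ D := by
    have hsub : C ⊆ D ∪ (closure D)ᶜ := by
      intro z hz
      by_cases hzcl : z ∈ closure D
      · left
        by_contra hzD
        have : z ∈ frontier D := hfrD ▸ ⟨hzcl, hzD⟩
        exact (hCTc hz) (hPT (hDP this))
      · right; exact hzcl
    have hdisj : Disjoint D (closure D)ᶜ :=
      Set.disjoint_compl_right_iff_subset.mpr subset_closure
    exact isPreconnected_connectedComponentIn.subset_left_of_subset_union hDo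
      isClosed_closure.isOpen_compl hdisj hsub ⟨y, (hEsub hy).1, hED hy⟩
  have hCeq : C = D := Set.Subset.antisymm hCD hDC
  have hxD : x ∈ D := hCD hxC
  have hxT' : x ∉ T' := hDT'c hxD
  refine ⟨hxT', ?_⟩
  have h2 : connectedComponentIn T'ᶜ y = connectedComponentIn T'ᶜ x :=
    connectedComponentIn_eq hxD
  rw [← h2]
  exact hCeq.symm

theorem even_card_of_involution : ∀ (s : Finset ℕ) (f : ℕ → ℕ), (∀ a ∈ s, f a ∈ s) →
    (∀ a ∈ s, f (f a) = a) → (∀ a ∈ s, f a ≠ a) → Even s.card := by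
  intro s
  induction s using Finset.strongInductionOn with
  | _ s ih =>
    intro f h1 h2 h3
    rcases s.eq_empty_or_nonempty with rfl | ⟨a, ha⟩
    · simp
    · have hfa : f a ∈ s := h1 a ha
      have hne : f a ≠ a := h3 a ha
      set s' := (s.erase a).erase (f a) with hs'
      have hsub : s' ⊆ s := (Finset.erase_subset _ _).trans (Finset.erase_subset _ _)
      have hss : s' ⊂ s :=
        Finset.ssubset_of_subset_of_ssubset (Finset.erase_subset _ _) (Finset.erase_ssubset ha)
      have hmem : ∀ b, b ∈ s' ↔ b ∈ s ∧ b ≠ a ∧ b ≠ f a := by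
        intro b
        rw [hs', Finset.mem_erase, Finset.mem_erase]
        tauto
      have hcard : s.card = s'.card + 2 := by
        rw [hs', Finset.card_erase_of_mem (Finset.mem_erase.mpr ⟨hne, hfa⟩),
          Finset.card_erase_of_mem ha]
        have h2le : 2 ≤ s.card := Finset.one_lt_card.mpr ⟨a, ha, f a, hfa, Ne.symm hne⟩
        omega
      have even' : Even s'.card := by
        refine ih s' hss f ?_ ?_ ?_
        · intro b hb
          rw [hmem] at hb ⊢
          obtain ⟨hbs, hba, hbfa⟩ := hb
          refine ⟨h1 b hbs, ?_, ?_⟩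
          · intro hfb
            exact hbfa (by rw [← h2 b hbs, hfb])
          · intro hfb
            exact hba (by
              have := congrArg f hfb
              rwa [h2 b hbs, h2 a ha] at this)
        · intro b hb; exact h2 b (hsub hb)
        · intro b hb; exact h3 b (hsub hb)
      obtain ⟨m, hm⟩ := even'
      exact ⟨m + 1, by omega⟩

end AuxiliaryLemmas

/-- parity of the number of levels above each point; if k is odd, π(S) = G. -/
theorem stmt10 (G : Type*) [TopologicalSpace G] [CompactSpace G] [T2Space G]
    [ConnectedSpace G] (hG : IsGraphSpace G)
    (S : Set (G × unitInterval)) (Sp α β : ℕ → Set (G × unitInterval)) (k : ℕ)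
    (h : IsStairwell Sp α β k S) :
    (∀ x : G, {i : ℕ | i ∈ Set.Icc 1 k ∧ x ∈ Prod.fst '' Sp i}.ncard % 2 = k % 2) ∧
    (Odd k → Prod.fst '' S = Set.univ) := by
  classical
  obtain ⟨hk1, hS1, hSU, hS2, hα1, hβk, hβα, hS3, hS4, hS5a, hS5b⟩ := h
  haveI hLC : LocallyConnectedSpace G := hG.locallyConnectedSpace
  set T : ℕ → Set G := fun i => Prod.fst '' Sp i with hT
  set A : ℕ → Set G := fun i => Prod.fst '' α i with hA
  set B : ℕ → Set G := fun i => Prod.fst '' β i with hB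
  have hreg : ∀ i ∈ Set.Icc 1 k, IsRegularSet (T i) := fun i hi => (hS1 i hi).2.2.2
  have hTcl : ∀ i ∈ Set.Icc 1 k, IsClosed (T i) := fun i hi => (hreg i hi).1
  have hTne : ∀ i ∈ Set.Icc 1 k, (T i).Nonempty := fun i hi => (hS1 i hi).1.image _
  have hfrT : ∀ i ∈ Set.Icc 1 k, frontier (T i) = A i ∪ B i := by
    intro i hi
    have he := (hS2 i hi).1
    have h1 : Prod.fst '' endSet (Sp i) = T i ∩ frontier (T i) :=
      Set.image_inter_preimage Prod.fst (Sp i) (frontier (Prod.fst '' Sp i))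
    have h2 : T i ∩ frontier (T i) = frontier (T i) :=
      Set.inter_eq_self_of_subset_right (hTcl i hi).frontier_subset
    rw [← h2, ← h1, he, Set.image_union]
  have hAT : ∀ i ∈ Set.Icc 1 k, A i ⊆ T i := fun i hi =>
    (Set.subset_union_left.trans (hfrT i hi).symm.subset).trans (hTcl i hi).frontier_subset
  have hBT : ∀ i ∈ Set.Icc 1 k, B i ⊆ T i := fun i hi =>
    (Set.subset_union_right.trans (hfrT i hi).symm.subset).trans (hTcl i hi).frontier_subset
  have hA1 : A 1 = ∅ := by rw [hA]; simp [hα1]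
  have hBk : B k = ∅ := by rw [hB]; simp [hβk]
  have hBA : ∀ i, 1 ≤ i → i < k → B i = A (i + 1) := by
    intro i h1 h2
    rw [hA, hB]
    simp only [hβα i h1 h2]
  have hABdisj : ∀ i ∈ Set.Icc 1 k, A i ∩ B i = ∅ := by
    intro i hi
    rcases eq_or_lt_of_le hi.2 with hik | hik
    · rw [hik, hBk, Set.inter_empty]
    · rcases eq_or_lt_of_le hi.1 with hi1 | hi1
      · rw [← hi1, hA1, Set.empty_inter]
      · rw [hBA i hi.1 hik]
        exact hS5b i (i + 1) hi1 (Nat.lt_succ_self i) hik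
  have hord : ∀ i, 2 ≤ i → i ≤ k → ∀ g ∈ A i, IsOrdinaryPoint g := by
    intro i h2 hk g hg
    obtain ⟨q, hq, rfl⟩ := hg
    exact hS5a i ⟨h2, hk⟩ q hq
  have hBfin : ∀ i ∈ Set.Icc 1 k, (B i).Finite := fun i hi => ((hS2 i hi).2.2.2).image _
  have hAfin : ∀ i ∈ Set.Icc 1 k, (A i).Finite := fun i hi => ((hS2 i hi).2.2.1).image _
  have main : ∀ x : G, {i : ℕ | i ∈ Set.Icc 1 k ∧ x ∈ T i}.ncard % 2 = k % 2 := by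
    intro x
    have dich : ∀ i, i ∈ Set.Icc 1 k → x ∉ T i →
        (frontier (connectedComponentIn (T i)ᶜ x)).Nonempty ∧
        (frontier (connectedComponentIn (T i)ᶜ x) ⊆ A i ∨
          frontier (connectedComponentIn (T i)ᶜ x) ⊆ B i) := by
      intro i hi hx
      have hne := frontier_ccIn_nonempty (hTne i hi) hx
      refine ⟨hne, ?_⟩
      have hfr : frontier (connectedComponentIn (T i)ᶜ x) ⊆ A i ∪ B i :=
        (frontier_ccIn_subset (hTcl i hi) hx).trans (hfrT i hi).subset
      rcases (hS4 i hi).1 x hx with h | h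
      · exact Or.inl h
      · right
        intro z hz
        rcases hfr hz with hzA | hzB
        · exact absurd (Set.eq_empty_iff_forall_notMem.mp h z ⟨hz, hzA⟩) not_false
        · exact hzB
    have notboth : ∀ i, i ∈ Set.Icc 1 k → x ∉ T i →
        frontier (connectedComponentIn (T i)ᶜ x) ⊆ A i →
        ¬ frontier (connectedComponentIn (T i)ᶜ x) ⊆ B i := by
      intro i hi hx hA' hB'
      obtain ⟨p, hp⟩ := (dich i hi hx).1
      exact Set.eq_empty_iff_forall_notMem.mp (hABdisj i hi) p ⟨hA' hp, hB' hp⟩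
    have bswap : ∀ i, i ∈ Set.Icc 1 k → x ∉ T i →
        frontier (connectedComponentIn (T i)ᶜ x) ⊆ B i →
        i < k ∧ x ∉ T (i + 1) ∧
          connectedComponentIn (T (i + 1))ᶜ x = connectedComponentIn (T i)ᶜ x := by
      intro i hi hx hfrB
      have hne := (dich i hi hx).1
      have hile : 1 ≤ i := hi.1
      have hige : i ≤ k := hi.2
      have hik : i < k := by
        rcases eq_or_lt_of_le hige with heq | hlt
        · exfalso
          have hBi : B i = ∅ := by rw [heq]; exact hBk
          rw [hBi, Set.subset_empty_iff] at hfrB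
          exact hne.ne_empty hfrB
        · exact hlt
      have hi1 : i + 1 ∈ Set.Icc 1 k := ⟨by omega, by omega⟩
      obtain ⟨V, hVo, hBV, hTV⟩ := hS3 i hile hik
      have hccP : ∀ y, y ∉ T (i + 1) →
          frontier (connectedComponentIn (T (i + 1))ᶜ y) ∩ B i ≠ ∅ →
          frontier (connectedComponentIn (T (i + 1))ᶜ y) ⊆ B i := by
        intro y hy hne'
        rw [hBA i hile hik] at hne' ⊢
        rcases (hS4 (i + 1) hi1).1 y hy with hc | hc
        · exact hc
        · exact absurd hc hne'
      have hres := swap_lemma (hTcl i hi) (hTcl (i + 1) hi1) (hTne i hi) (hBfin i hi)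
        (hBT i hi) (by rw [hBA i hile hik]; exact hAT (i + 1) hi1)
        (fun p hp => hord (i + 1) (by omega) (by omega) p
          (by rw [← hBA i hile hik]; exact hp))
        hVo hBV hTV hccP hx hfrB
      exact ⟨hik, hres.1, hres.2⟩
    have aswap : ∀ i, i ∈ Set.Icc 1 k → x ∉ T i →
        frontier (connectedComponentIn (T i)ᶜ x) ⊆ A i →
        2 ≤ i ∧ x ∉ T (i - 1) ∧
          connectedComponentIn (T (i - 1))ᶜ x = connectedComponentIn (T i)ᶜ x := by
      intro i hi hx hfrA
      have hne := (dich i hi hx).1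
      have hile : 1 ≤ i := hi.1
      have hige : i ≤ k := hi.2
      have h2i : 2 ≤ i := by
        rcases eq_or_lt_of_le hile with heq | hlt
        · exfalso
          have hAi : A i = ∅ := by rw [← heq]; exact hA1
          rw [hAi, Set.subset_empty_iff] at hfrA
          exact hne.ne_empty hfrA
        · omega
      have hlt : i - 1 < k := by omega
      have h1le : 1 ≤ i - 1 := by omega
      have hi1 : i - 1 ∈ Set.Icc 1 k := ⟨h1le, by omega⟩
      have heq : i - 1 + 1 = i := by omega
      have hBAi : B (i - 1) = A i := by
        have hh := hBA (i - 1) h1le hlt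
        rwa [heq] at hh
      obtain ⟨V, hVo, hBV, hTV⟩ := hS3 (i - 1) h1le hlt
      rw [heq] at hTV
      have hBV' : A i ⊆ V := by rw [← hBAi]; exact hBV
      have hTV' : T i ∩ V = T (i - 1) ∩ V := hTV.symm
      have hccP : ∀ y, y ∉ T (i - 1) →
          frontier (connectedComponentIn (T (i - 1))ᶜ y) ∩ A i ≠ ∅ →
          frontier (connectedComponentIn (T (i - 1))ᶜ y) ⊆ A i := by
        intro y hy hne'
        rw [← hBAi] at hne' ⊢
        rcases (hS4 (i - 1) hi1).2 y hy with hc | hc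
        · exact hc
        · exact absurd hc hne'
      have hres := swap_lemma (hTcl i hi) (hTcl (i - 1) hi1) (hTne i hi) (hAfin i hi)
        (hAT i hi) (by rw [← hBAi]; exact hBT (i - 1) hi1)
        (fun p hp => hord i h2i hige p hp)
        hVo hBV' hTV' hccP hx hfrA
      exact ⟨h2i, hres.1, hres.2⟩
    set F : ℕ → ℕ := fun i =>
      if frontier (connectedComponentIn (T i)ᶜ x) ⊆ B i then i + 1 else i - 1 with hF
    set Ms : Finset ℕ := (Finset.Icc 1 k).filter (fun i => ¬ x ∈ T i) with hMs
    have hMsmem : ∀ i, i ∈ Ms ↔ i ∈ Set.Icc 1 k ∧ x ∉ T i := by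
      intro i
      rw [hMs, Finset.mem_filter, Finset.mem_Icc, Set.mem_Icc]
    have heven : Even Ms.card := by
      apply even_card_of_involution Ms F
      · intro a ha
        rw [hMsmem] at ha ⊢
        obtain ⟨haI, hax⟩ := ha
        have ha1 : 1 ≤ a := haI.1
        have hak' : a ≤ k := haI.2
        rcases (dich a haI hax).2 with hAc | hBc
        · have hnb := notboth a haI hax hAc
          have hFa : F a = a - 1 := by simp only [hF]; rw [if_neg hnb]
          obtain ⟨h2a, hax', -⟩ := aswap a haI hax hAc
          rw [hFa]
          exact ⟨⟨by omega, by omega⟩, hax'⟩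
        · have hFa : F a = a + 1 := by simp only [hF]; rw [if_pos hBc]
          obtain ⟨hak, hax', -⟩ := bswap a haI hax hBc
          rw [hFa]
          exact ⟨⟨by omega, by omega⟩, hax'⟩
      · intro a ha
        rw [hMsmem] at ha
        obtain ⟨haI, hax⟩ := ha
        have ha1 : 1 ≤ a := haI.1
        have hak' : a ≤ k := haI.2
        rcases (dich a haI hax).2 with hAc | hBc
        · have hnb := notboth a haI hax hAc
          have hFa : F a = a - 1 := by simp only [hF]; rw [if_neg hnb]
          obtain ⟨h2a, hax', hceq⟩ := aswap a haI hax hAc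
          have heqa : a - 1 + 1 = a := by omega
          have hBc' : frontier (connectedComponentIn (T (a - 1))ᶜ x) ⊆ B (a - 1) := by
            rw [hceq, hBA (a - 1) (by omega) (by omega), heqa]
            exact hAc
          have hFb : F (a - 1) = a - 1 + 1 := by simp only [hF]; rw [if_pos hBc']
          rw [hFa, hFb, heqa]
        · have hFa : F a = a + 1 := by simp only [hF]; rw [if_pos hBc]
          obtain ⟨hak, hax', hceq⟩ := bswap a haI hax hBc
          have haI1 : a + 1 ∈ Set.Icc 1 k := ⟨by omega, by omega⟩
          have hAc' : frontier (connectedComponentIn (T (a + 1))ᶜ x) ⊆ A (a + 1) := by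
            rw [hceq, ← hBA a haI.1 hak]
            exact hBc
          have hnb' := notboth (a + 1) haI1 hax' hAc'
          have hFb : F (a + 1) = a + 1 - 1 := by simp only [hF]; rw [if_neg hnb']
          rw [hFa, hFb]
          omega
      · intro a ha
        rw [hMsmem] at ha
        obtain ⟨haI, hax⟩ := ha
        have h1a : 1 ≤ a := haI.1
        simp only [hF]
        split <;> omega
    have hsplit := Finset.card_filter_add_card_filter_not
      (s := Finset.Icc 1 k) (p := fun i => x ∈ T i)
    have hset : {i : ℕ | i ∈ Set.Icc 1 k ∧ x ∈ T i}
        = ↑((Finset.Icc 1 k).filter (fun i => x ∈ T i)) := by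
      ext i
      simp only [Finset.coe_filter, Finset.mem_Icc, Set.mem_Icc, Set.mem_setOf_eq]
    rw [hset, Set.ncard_coe_finset]
    have hIcc : (Finset.Icc 1 k).card = k := by rw [Nat.card_Icc]; omega
    obtain ⟨m, hm⟩ := heven
    have hMsc : Ms.card = ((Finset.Icc 1 k).filter (fun i => ¬ x ∈ T i)).card := rfl
    omega
  refine ⟨main, ?_⟩
  intro hodd
  rw [Set.eq_univ_iff_forall]
  intro x
  have hm := main x
  have hne : {i : ℕ | i ∈ Set.Icc 1 k ∧ x ∈ T i}.ncard ≠ 0 := by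
    intro h0
    rw [h0] at hm
    rw [Nat.odd_iff] at hodd
    omega
  obtain ⟨i, hi, hxi⟩ := Set.nonempty_of_ncard_ne_zero hne
  rw [hSU]
  obtain ⟨q, hq, rfl⟩ := hxi
  exact ⟨q, Set.mem_biUnion hi hq, rfl⟩
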